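/- Fix 0 < ρ < 1 and let d ≤ n. Let H be a linear subspace of ℝ^n of dimension at most d. Let v = (v_1,…,v_n) be a random vector whose coordinates are mutually independent real random variables, at least n−1 of which have the ρ-property (max_{c∈ℝ} P(v_i = c) ≤ ρ). Then P(v ∈ H) ≤ ρ^{n−d−1}. -/

import Mathlib

open MeasureTheory ProbabilityTheory

/-- A real random variable `ξ` (on a probability space with measure `μ`) has the
`ρ`-property if `P(ξ = c) ≤ ρ` for every real `c`. -/
def RhoProperty {Ω : Type*} [MeasurableSpace Ω] (μ : Measure Ω) (ξ : Ω → ℝ) (ρ : ℝ) : Prop :=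
  ∀ c : ℝ, μ {ω | ξ ω = c} ≤ ENNReal.ofReal ρ

/-- Greedy selection of a "pivot" coordinate set: any subspace `W` of `ℝⁿ` admits a set `B`
of at most `finrank W` coordinates such that an element of `W` vanishing on `B` is zero. -/
lemma exists_coord_finset {n : ℕ} :
    ∀ (r : ℕ) (W : Submodule ℝ (Fin n → ℝ)), Module.finrank ℝ W ≤ r →
    ∃ B : Finset (Fin n), B.card ≤ Module.finrank ℝ W ∧
      ∀ x ∈ W, (∀ i ∈ B, x i = 0) → x = 0 := by
  intro r
  induction r with
  | zero =>
    intro W hW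
    refine ⟨∅, by simp, fun x hx _ => ?_⟩
    have : W = ⊥ := Submodule.finrank_eq_zero.mp (Nat.le_zero.mp hW)
    simpa [this] using hx
  | succ r ih =>
    intro W hW
    by_cases hbot : W = ⊥
    · exact ⟨∅, by simp, fun x hx _ => by simpa [hbot] using hx⟩
    · obtain ⟨x, hxW, hx0⟩ := Submodule.exists_mem_ne_zero_of_ne_bot hbot
      obtain ⟨i, hxi⟩ : ∃ i, x i ≠ 0 := by
        by_contra h
        push_neg at h
        exact hx0 (funext h)
      set W' := W ⊓ LinearMap.ker (LinearMap.proj i : (Fin n → ℝ) →ₗ[ℝ] ℝ) with hW'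
      have hlt : W' < W := by
        refine lt_of_le_of_ne inf_le_left fun h => hxi ?_
        have : x ∈ W' := h ▸ hxW
        simpa using this.2
      have hrank : Module.finrank ℝ W' < Module.finrank ℝ W :=
        Submodule.finrank_lt_finrank_of_lt hlt
      obtain ⟨B, hB1, hB2⟩ := ih W' (by omega)
      refine ⟨insert i B, ?_, ?_⟩
      · calc (insert i B).card ≤ B.card + 1 := Finset.card_insert_le _ _
          _ ≤ Module.finrank ℝ W' + 1 := by omega
          _ ≤ Module.finrank ℝ W := by omega
      · intro y hy hzero
        have hyi : y i = 0 := hzero i (Finset.mem_insert_self _ _)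
        have hyW' : y ∈ W' := ⟨hy, by simpa using hyi⟩
        exact hB2 y hyW' fun j hj => hzero j (Finset.mem_insert_of_mem hj)

/-- Let `0 < ρ < 1`, `d ≤ n`, and let `H` be a linear subspace of `ℝ^n` of dimension at most
`d`.  Let `v` be a random vector with mutually independent real coordinates, at least `n - 1`
of which have the `ρ`-property.  Then `P(v ∈ H) ≤ ρ^{n-d-1}`. -/
theorem prob_random_vector_in_subspace (ρ : ℝ) (hρ0 : 0 < ρ) (hρ1 : ρ < 1)
    (n d : ℕ) (hdn : d ≤ n) (H : Submodule ℝ (Fin n → ℝ)) (hH : Module.finrank ℝ H ≤ d)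
    {Ω : Type*} [MeasurableSpace Ω] (μ : Measure Ω) [IsProbabilityMeasure μ]
    (v : Fin n → Ω → ℝ) (hmeas : ∀ i, Measurable (v i))
    (hindep : iIndepFun v μ)
    (s : Finset (Fin n)) (hs : n - 1 ≤ s.card)
    (hρprop : ∀ i ∈ s, RhoProperty μ (v i) ρ) :
    μ {ω | (fun i => v i ω) ∈ H} ≤ ENNReal.ofReal (ρ ^ ((n : ℝ) - d - 1)) := by
  classical
  obtain ⟨B, hBcard, hBinj⟩ := exists_coord_finset (Module.finrank ℝ H) H le_rfl
  have hBd : B.card ≤ d := hBcard.trans hH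
  set T : Finset (Fin n) := s \ B with hT
  set m : ℕ := T.card with hm
  -- the laws of the coordinates
  set ν : Fin n → Measure ℝ := fun i => μ.map (v i) with hν
  haveI : ∀ i, IsProbabilityMeasure (ν i) := fun i =>
    Measure.isProbabilityMeasure_map (hmeas i).aemeasurable
  have hvmeas : Measurable (fun ω i => v i ω) := measurable_pi_iff.mpr hmeas
  -- the joint law is the product measure
  have hmap : Measure.pi ν = μ.map (fun ω i => v i ω) := by
    refine Measure.pi_eq fun A hA => ?_
    rw [Measure.map_apply hvmeas (MeasurableSet.univ_pi hA)]
    have hpre : (fun ω i => v i ω) ⁻¹' Set.pi Set.univ A = ⋂ i ∈ Finset.univ, v i ⁻¹' A i := by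
      ext ω; simp [Set.mem_pi]
    rw [hpre, hindep.measure_inter_preimage_eq_mul Finset.univ fun i _ => hA i]
    exact Finset.prod_congr rfl fun i _ =>
      (Measure.map_apply (hmeas i) (hA i)).symm
  have hHmeas : MeasurableSet (H : Set (Fin n → ℝ)) :=
    H.closed_of_finiteDimensional.measurableSet
  have hset : {ω | (fun i => v i ω) ∈ H} = (fun ω i => v i ω) ⁻¹' (H : Set (Fin n → ℝ)) := rfl
  rw [hset, ← Measure.map_apply hvmeas hHmeas, ← hmap]
  -- split the coordinates into those in `T` and the rest
  set p : Fin n → Prop := fun i => i ∈ T with hp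
  letI instF : Fintype (Subtype p) := Subtype.fintype p
  set e := MeasurableEquiv.piEquivPiSubtypeProd (fun _ : Fin n => ℝ) p with he
  have hmp := MeasureTheory.measurePreserving_piEquivPiSubtypeProd ν p
  set S : Set ((∀ i : Subtype p, ℝ) × (∀ i : {i // ¬ p i}, ℝ)) := ⇑e.symm ⁻¹' ↑H with hSdef
  have hSmeas : MeasurableSet S := e.symm.measurable hHmeas
  have hHeq : (H : Set (Fin n → ℝ)) = ⇑e ⁻¹' S := by
    ext x
    simp [hSdef]
  rw [hHeq, hmp.measure_preimage hSmeas.nullMeasurableSet]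
  rw [Measure.prod_apply_symm hSmeas]
  -- each slice is a subsingleton
  have hslice : ∀ y : (∀ i : {i // ¬ p i}, ℝ),
      (Measure.pi fun i : Subtype p => ν i) ((fun x => (x, y)) ⁻¹' S) ≤
        (ENNReal.ofReal ρ) ^ m := by
    intro y
    have hsub : Set.Subsingleton ((fun x => (x, y)) ⁻¹' S) := by
      intro x₁ hx₁ x₂ hx₂
      have hz₁ : e.symm (x₁, y) ∈ H := hx₁
      have hz₂ : e.symm (x₂, y) ∈ H := hx₂
      have hdiff : e.symm (x₁, y) - e.symm (x₂, y) ∈ H := H.sub_mem hz₁ hz₂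
      have hzero : ∀ i ∈ B, (e.symm (x₁, y) - e.symm (x₂, y)) i = 0 := by
        intro i hiB
        have hiT : ¬ p i := by
          simp only [hp, hT, Finset.mem_sdiff, not_and, not_not]
          intro _; exact hiB
        have h1 : e.symm (x₁, y) i = y ⟨i, hiT⟩ := by
          simp [he, MeasurableEquiv.piEquivPiSubtypeProd,
            Equiv.piEquivPiSubtypeProd_symm_apply, dif_neg hiT]
        have h2 : e.symm (x₂, y) i = y ⟨i, hiT⟩ := by
          simp [he, MeasurableEquiv.piEquivPiSubtypeProd,
            Equiv.piEquivPiSubtypeProd_symm_apply, dif_neg hiT]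
        simp [Pi.sub_apply, h1, h2]
      have heq := hBinj _ hdiff hzero
      have heq' : e.symm (x₁, y) = e.symm (x₂, y) := by
        have := sub_eq_zero.mp heq
        exact this
      have : (x₁, y) = (x₂, y) := e.symm.injective heq'
      exact (Prod.mk.injEq _ _ _ _).mp this |>.1
    rcases hsub.eq_empty_or_singleton with hempty | ⟨c, hc⟩
    · simp [hempty]
    · rw [hc, ← Set.univ_pi_singleton, Measure.pi_pi]
      have hbound : ∀ i : Subtype p, ν i {c i} ≤ ENNReal.ofReal ρ := by
        intro i
        have his : (i : Fin n) ∈ s := (Finset.mem_sdiff.mp i.2).1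
        have : ν i {c i} = μ {ω | v i ω = c i} := by
          rw [hν, Measure.map_apply (hmeas i) (measurableSet_singleton _)]
          rfl
        rw [this]
        exact hρprop i his (c i)
      calc ∏ i : Subtype p, ν i {c i} ≤ ∏ _i : Subtype p, ENNReal.ofReal ρ :=
            Finset.prod_le_prod' fun i _ => hbound i
        _ = (ENNReal.ofReal ρ) ^ (Fintype.card (Subtype p)) := by
            rw [Finset.prod_const, Finset.card_univ]
        _ = (ENNReal.ofReal ρ) ^ m := by
            congr 1
            simp [hp, Fintype.card_subtype, hm]
  refine le_trans (lintegral_mono (g := fun _ => (ENNReal.ofReal ρ) ^ m) (Pi.le_def.mpr hslice)) ?_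
  rw [lintegral_const, measure_univ, mul_one]
  rw [← ENNReal.ofReal_pow hρ0.le]
  apply ENNReal.ofReal_le_ofReal
  rw [← Real.rpow_natCast ρ m]
  apply Real.rpow_le_rpow_of_exponent_ge hρ0 hρ1.le
  have h1 : s.card - B.card ≤ m := by
    rw [hm, hT]; exact Finset.le_card_sdiff B s
  have h2 : n ≤ m + d + 1 := by omega
  have := Nat.cast_le (α := ℝ) |>.mpr h2
  push_cast at this ⊢
  linarith
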